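/- Let (V, β) be a finite-dimensional ℚ-vector space with a nondegenerate symmetric bilinear form, and let L ⊆ V be a finitely generated subgroup of rank equal to dim V such that β(x, y) ∈ ℤ and β(x, x) ∈ 2ℤ for all x, y ∈ L (an even lattice). Let L^∨ = {v ∈ V : β(v, x) ∈ ℤ for all x ∈ L} be the dual lattice, and assume the quotient L^∨/L has order 16 and is generated by the classes of two elements u, v ∈ L^∨, each of order 4, satisfying β(u,u) - 1/2 ∈ 2ℤ, β(v,v) - 1/2 ∈ 2ℤ, and β(u,v) - 3/4 ∈ ℤ. Then there is exactly one subgroup L' with L ⊆ L' ⊆ L^∨ of index 4 over L such that β is ℤ-valued on L' × L' and β(x,x) ∈ 2ℤ for all x ∈ L' (i.e., a unique even overlattice of index 4); moreover L'/L ≅ ℤ/2ℤ × ℤ/2ℤ. -/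
import Mathlib

lemma two_dvd_iff_zmod4 (a : ℤ) : 2 ∣ a ↔ ((a : ZMod 4) = 0 ∨ (a : ZMod 4) = 2) := by
  have h0 := ZMod.intCast_zmod_eq_zero_iff_dvd a 4
  have h2 := ZMod.intCast_zmod_eq_zero_iff_dvd (a - 2) 4
  push_cast at h0 h2
  rw [sub_eq_zero] at h2
  rw [h0, h2]
  omega

lemma quad_mod4 (a b : ℤ) : (4:ℤ) ∣ a*a + b*b + 3*(a*b) ↔ (2 ∣ a ∧ 2 ∣ b) := by
  have key : ∀ A B : ZMod 4, (A*A + B*B + 3*(A*B) = 0) ↔ ((A = 0 ∨ A = 2) ∧ (B = 0 ∨ B = 2)) := by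
    decide
  have h0 := ZMod.intCast_zmod_eq_zero_iff_dvd (a*a + b*b + 3*(a*b)) 4
  push_cast at h0
  rw [← h0, key, ← two_dvd_iff_zmod4, ← two_dvd_iff_zmod4]



/-- The dual lattice `L^∨ = {v ∈ V : β(v, x) ∈ ℤ for all x ∈ L}` of a subgroup `L` of a
rational vector space with a bilinear form `β`. -/
def dualLattice {V : Type*} [AddCommGroup V] [Module ℚ V]
    (β : LinearMap.BilinForm ℚ V) (L : Submodule ℤ V) : Submodule ℤ V where
  carrier := {v | ∀ x ∈ L, ∃ n : ℤ, β v x = (n : ℚ)}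
  zero_mem' := fun x _ => ⟨0, by simp⟩
  add_mem' := by
    intro a b ha hb x hx
    obtain ⟨m, hm⟩ := ha x hx
    obtain ⟨n, hn⟩ := hb x hx
    exact ⟨m + n, by simp only [map_add, LinearMap.add_apply, hm, hn]; push_cast; ring⟩
  smul_mem' := by
    intro n v hv x hx
    obtain ⟨m, hm⟩ := hv x hx
    refine ⟨n * m, ?_⟩
    rw [map_zsmul, LinearMap.smul_apply, hm, zsmul_eq_mul]
    push_cast
    ring

/-- The quotient `L'/L` of two lattices `L ≤ L'` in `V`. -/
abbrev latticeQuot {V : Type*} [AddCommGroup V] [Module ℚ V]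
    (L L' : Submodule ℤ V) :=
  L' ⧸ (L.comap L'.subtype)


/-- The overlattice generated by `L` and two vectors. -/
def overL {V : Type*} [AddCommGroup V] (L : Submodule ℤ V) (p q : V) : Submodule ℤ V where
  carrier := {x | ∃ a b : ℤ, x - a • p - b • q ∈ L}
  zero_mem' := ⟨0, 0, by simp⟩
  add_mem' := by
    rintro x y ⟨a, b, ha⟩ ⟨c, d, hc⟩
    refine ⟨a + c, b + d, ?_⟩
    have := L.add_mem ha hc
    convert this using 1
    rw [add_smul, add_smul]
    abel
  smul_mem' := by
    rintro n x ⟨a, b, ha⟩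
    refine ⟨n * a, n * b, ?_⟩
    have := L.smul_mem n ha
    convert this using 1
    rw [smul_sub, smul_sub, mul_smul, mul_smul]

lemma mem_overL {V : Type*} [AddCommGroup V] {L : Submodule ℤ V} {p q x : V} :
    x ∈ overL L p q ↔ ∃ a b : ℤ, x - a • p - b • q ∈ L := Iff.rfl

set_option maxHeartbeats 1000000 in
theorem unique_even_overlattice
    {V : Type*} [AddCommGroup V] [Module ℚ V] [FiniteDimensional ℚ V]
    (β : LinearMap.BilinForm ℚ V)
    (hsymm : ∀ x y : V, β x y = β y x)
    (hnd : β.Nondegenerate)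
    (L : Submodule ℤ V) (hfg : L.FG)
    (hfull : Submodule.span ℚ (L : Set V) = ⊤)
    (hint : ∀ x ∈ L, ∀ y ∈ L, ∃ n : ℤ, β x y = (n : ℚ))
    (heven : ∀ x ∈ L, ∃ n : ℤ, β x x = 2 * (n : ℚ))
    (hLdual : L ≤ dualLattice β L)
    (hcard : Nat.card (latticeQuot L (dualLattice β L)) = 16)
    (u v : V) (hu : u ∈ dualLattice β L) (hv : v ∈ dualLattice β L)
    (hgen : AddSubgroup.closure
        {(Submodule.Quotient.mk ⟨u, hu⟩ : latticeQuot L (dualLattice β L)),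
         (Submodule.Quotient.mk ⟨v, hv⟩ : latticeQuot L (dualLattice β L))} = ⊤)
    (hordu : addOrderOf (Submodule.Quotient.mk ⟨u, hu⟩ : latticeQuot L (dualLattice β L)) = 4)
    (hordv : addOrderOf (Submodule.Quotient.mk ⟨v, hv⟩ : latticeQuot L (dualLattice β L)) = 4)
    (hqu : ∃ k : ℤ, β u u - 1/2 = 2 * (k : ℚ))
    (hqv : ∃ k : ℤ, β v v - 1/2 = 2 * (k : ℚ))
    (hbuv : ∃ k : ℤ, β u v - 3/4 = (k : ℚ)) :
    (∃! L' : Submodule ℤ V,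
      L ≤ L' ∧ L' ≤ dualLattice β L ∧
      Nat.card (latticeQuot L L') = 4 ∧
      (∀ x ∈ L', ∀ y ∈ L', ∃ n : ℤ, β x y = (n : ℚ)) ∧
      (∀ x ∈ L', ∃ n : ℤ, β x x = 2 * (n : ℚ))) ∧
    ∀ L' : Submodule ℤ V,
      (L ≤ L' ∧ L' ≤ dualLattice β L ∧
        Nat.card (latticeQuot L L') = 4 ∧
        (∀ x ∈ L', ∀ y ∈ L', ∃ n : ℤ, β x y = (n : ℚ)) ∧
        (∀ x ∈ L', ∃ n : ℤ, β x x = 2 * (n : ℚ))) →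
      Nonempty (latticeQuot L L' ≃+ (ZMod 2 × ZMod 2)) := by  classical
  obtain ⟨k₁, hk₁⟩ := hqu
  obtain ⟨k₂, hk₂⟩ := hqv
  obtain ⟨k₃, hk₃⟩ := hbuv
  set Ld := dualLattice β L with hLdd
  set ub : latticeQuot L Ld := Submodule.Quotient.mk ⟨u, hu⟩ with hubd
  set vb : latticeQuot L Ld := Submodule.Quotient.mk ⟨v, hv⟩ with hvbd
  have hDfin : Finite (latticeQuot L Ld) :=
    Nat.finite_of_card_ne_zero (by rw [hcard]; norm_num)
  have h4ub : (4:ℤ) • ub = 0 := by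
    have h := addOrderOf_nsmul_eq_zero ub
    rw [hordu] at h
    rw [show (4:ℤ) = ((4:ℕ):ℤ) by norm_num, natCast_zsmul]
    exact h
  have h4vb : (4:ℤ) • vb = 0 := by
    have h := addOrderOf_nsmul_eq_zero vb
    rw [hordv] at h
    rw [show (4:ℤ) = ((4:ℕ):ℤ) by norm_num, natCast_zsmul]
    exact h
  have h4uL : (4:ℤ) • u ∈ L := by
    have h : (4:ℤ) • (⟨u, hu⟩ : Ld) ∈ L.comap Ld.subtype := by
      rw [← Submodule.Quotient.mk_eq_zero, Submodule.Quotient.mk_smul]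
      exact h4ub
    simpa using h
  have h4vL : (4:ℤ) • v ∈ L := by
    have h : (4:ℤ) • (⟨v, hv⟩ : Ld) ∈ L.comap Ld.subtype := by
      rw [← Submodule.Quotient.mk_eq_zero, Submodule.Quotient.mk_smul]
      exact h4vb
    simpa using h
  have hrep : ∀ d : latticeQuot L Ld, ∃ a b : ℤ, d = a • ub + b • vb := by
    intro d
    have hd : d ∈ AddSubgroup.closure {ub, vb} := by rw [hgen]; trivial
    rw [AddSubgroup.mem_closure_pair] at hd
    obtain ⟨m, n, h⟩ := hd
    exact ⟨m, n, h.symm⟩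
  have hred : ∀ (x : latticeQuot L Ld), (4:ℤ) • x = 0 → ∀ a : ℤ,
      a • x = (((a : ZMod 4).val : ℤ)) • x := by
    intro x h4 a
    have hval : ((a : ZMod 4).val : ℤ) = a % 4 := by rw [ZMod.val_intCast]; norm_num
    rw [hval]
    conv_lhs => rw [show a = (a / 4) * 4 + a % 4 by omega]
    rw [add_smul, mul_smul, h4, smul_zero, zero_add]
  set f : ZMod 4 × ZMod 4 → latticeQuot L Ld :=
    fun p => ((p.1.val : ℤ)) • ub + ((p.2.val : ℤ)) • vb with hfd
  have hfsurj : Function.Surjective f := by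
    rintro d
    obtain ⟨a, b, rfl⟩ := hrep d
    exact ⟨((a : ZMod 4), (b : ZMod 4)),
      by simp only [hfd, ← hred ub h4ub a, ← hred vb h4vb b]⟩
  have hfbij : Function.Bijective f :=
    (Nat.bijective_iff_surjective_and_card f).mpr
      ⟨hfsurj, by rw [Nat.card_prod, Nat.card_zmod, hcard]⟩
  have hker : ∀ a b : ℤ, a • ub + b • vb = 0 → ((4:ℤ) ∣ a ∧ (4:ℤ) ∣ b) := by
    intro a b h
    have h2 : f ((a : ZMod 4), (b : ZMod 4)) = f (0, 0) := by
      simp only [hfd]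
      rw [← hred ub h4ub a, ← hred vb h4vb b, h]
      simp
    have h3 := hfbij.injective h2
    rw [Prod.ext_iff] at h3
    obtain ⟨e1, e2⟩ := h3
    constructor
    · exact_mod_cast (ZMod.intCast_zmod_eq_zero_iff_dvd a 4).mp e1
    · exact_mod_cast (ZMod.intCast_zmod_eq_zero_iff_dvd b 4).mp e2
  have hmk : ∀ (a b : ℤ) (x : V) (hx : x ∈ Ld),
      (x - (a • u + b • v) ∈ L ↔
        (Submodule.Quotient.mk ⟨x, hx⟩ : latticeQuot L Ld) = a • ub + b • vb) := by
    intro a b x hx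
    rw [show a • ub + b • vb
        = (Submodule.Quotient.mk (a • ⟨u,hu⟩ + b • ⟨v,hv⟩ : Ld) : latticeQuot L Ld) by
      rw [Submodule.Quotient.mk_add, Submodule.Quotient.mk_smul, Submodule.Quotient.mk_smul]]
    rw [Submodule.Quotient.eq]
    constructor
    · intro h; simpa using h
    · intro h; simpa using h
  have hself : ∀ (a b : ℤ) (l : V), l ∈ L → ∃ n : ℤ,
      2 * β (a • u + b • v + l) (a • u + b • v + l)
        = ((a*a + b*b + 3*(a*b) : ℤ) : ℚ) + 4 * (n:ℚ) := by
    intro a b l hl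
    obtain ⟨nul, hnul⟩ := hu l hl
    obtain ⟨nvl, hnvl⟩ := hv l hl
    obtain ⟨nll, hnll⟩ := heven l hl
    refine ⟨a*a*k₁ + b*b*k₂ + a*b*k₃ + a*nul + b*nvl + nll, ?_⟩
    have s1 : β v u = β u v := hsymm v u
    have s2 : β l u = β u l := hsymm l u
    have s3 : β l v = β v l := hsymm l v
    simp only [← Int.cast_smul_eq_zsmul ℚ, map_add, map_smul, LinearMap.add_apply,
      LinearMap.smul_apply, smul_eq_mul]
    push_cast
    linear_combination (2*(a:ℚ)*a)*hk₁ + (2*(b:ℚ)*b)*hk₂ + (4*(a:ℚ)*b)*hk₃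
      + (2*(a:ℚ)*b)*s1 + (2*(a:ℚ))*s2 + (2*(b:ℚ))*s3
      + (4*(a:ℚ))*hnul + (4*(b:ℚ))*hnvl + 2*hnll
  have hpair : ∀ (a b c d : ℤ) (l m : V), l ∈ L → m ∈ L → ∃ n : ℤ,
      β ((a*2) • u + (b*2) • v + l) ((c*2) • u + (d*2) • v + m) = (n : ℚ) := by
    intro a b c d l m hl hm
    obtain ⟨num, hnum⟩ := hu m hm
    obtain ⟨nvm, hnvm⟩ := hv m hm
    obtain ⟨nul, hnul⟩ := hu l hl
    obtain ⟨nvl, hnvl⟩ := hv l hl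
    obtain ⟨nlm, hnlm⟩ := hint l hl m hm
    refine ⟨2*a*c + 8*a*c*k₁ + 3*a*d + 4*a*d*k₃ + 3*b*c + 4*b*c*k₃ + 2*b*d + 8*b*d*k₂
      + 2*a*num + 2*b*nvm + 2*c*nul + 2*d*nvl + nlm, ?_⟩
    have s1 : β v u = β u v := hsymm v u
    have s2 : β l u = β u l := hsymm l u
    have s3 : β l v = β v l := hsymm l v
    simp only [← Int.cast_smul_eq_zsmul ℚ, map_add, map_smul, LinearMap.add_apply,
      LinearMap.smul_apply, smul_eq_mul]
    push_cast
    linear_combination (4*(a:ℚ)*c)*hk₁ + (4*(b:ℚ)*d)*hk₂ + (4*(a:ℚ)*d + 4*(b:ℚ)*c)*hk₃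
      + (4*(b:ℚ)*c)*s1 + (2*(c:ℚ))*s2 + (2*(d:ℚ))*s3
      + (2*(a:ℚ))*hnum + (2*(b:ℚ))*hnvm + (2*(c:ℚ))*hnul + (2*(d:ℚ))*hnvl + hnlm
  set L0 : Submodule ℤ V := overL L ((2:ℤ) • u) ((2:ℤ) • v) with hL0d
  have hL0mem : ∀ x : V, x ∈ L0 ↔ ∃ a b : ℤ, x - (a*2) • u - (b*2) • v ∈ L := by
    intro x
    rw [hL0d, mem_overL]
    constructor <;> rintro ⟨a, b, h⟩ <;> refine ⟨a, b, ?_⟩ <;>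
      simpa [smul_smul] using h
  have memL0 : ∀ a b : ℤ, (a*2) • u + (b*2) • v ∈ L0 := by
    intro a b
    rw [hL0mem]
    refine ⟨a, b, ?_⟩
    rw [show (a*2) • u + (b*2) • v - (a*2) • u - (b*2) • v = (0:V) by abel]
    exact L.zero_mem
  have c1 : L ≤ L0 := by
    intro x hx
    rw [hL0mem]
    exact ⟨0, 0, by simpa using hx⟩
  have c2 : L0 ≤ Ld := by
    intro x hx
    obtain ⟨a, b, h⟩ := (hL0mem x).mp hx
    have hx2 : x = (x - (a*2) • u - (b*2) • v) + (a*2) • u + (b*2) • v := by abel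
    rw [hx2]
    exact Ld.add_mem (Ld.add_mem (hLdual h) (Ld.smul_mem _ hu)) (Ld.smul_mem _ hv)
  have hdecomp : ∀ x ∈ L0, ∃ (a b : ℤ) (l : V), l ∈ L ∧ x = (a*2) • u + (b*2) • v + l := by
    intro x hx
    obtain ⟨a, b, h⟩ := (hL0mem x).mp hx
    exact ⟨a, b, _, h, by abel⟩
  have c4 : ∀ x ∈ L0, ∀ y ∈ L0, ∃ n : ℤ, β x y = (n : ℚ) := by
    intro x hx y hy
    obtain ⟨a, b, l, hl, rfl⟩ := hdecomp x hx
    obtain ⟨c, d, m, hm, rfl⟩ := hdecomp y hy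
    exact hpair a b c d l m hl hm
  have c5 : ∀ x ∈ L0, ∃ n : ℤ, β x x = 2 * (n : ℚ) := by
    intro x hx
    obtain ⟨a, b, l, hl, rfl⟩ := hdecomp x hx
    obtain ⟨n, hn⟩ := hself (a*2) (b*2) l hl
    refine ⟨a*a + b*b + 3*(a*b) + n, ?_⟩
    push_cast at hn ⊢
    linarith
  have hΦadd : ∀ p q : ℤ × ℤ,
      (Submodule.Quotient.mk ⟨((p.1+q.1)*2) • u + ((p.2+q.2)*2) • v, memL0 _ _⟩
        : latticeQuot L L0)
      = Submodule.Quotient.mk ⟨(p.1*2) • u + (p.2*2) • v, memL0 _ _⟩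
        + Submodule.Quotient.mk ⟨(q.1*2) • u + (q.2*2) • v, memL0 _ _⟩ := by
    intro p q
    rw [← Submodule.Quotient.mk_add]
    apply congrArg
    apply Subtype.ext
    simp only [Submodule.coe_add]
    rw [add_mul, add_mul, add_smul, add_smul]
    abel
  set Φ : ℤ × ℤ →+ latticeQuot L L0 := AddMonoidHom.mk'
    (fun p => Submodule.Quotient.mk ⟨(p.1*2) • u + (p.2*2) • v, memL0 p.1 p.2⟩)
    (fun p q => hΦadd p q) with hΦd
  have hΦsurj : Function.Surjective Φ := by
    intro d
    obtain ⟨⟨x, hx⟩, rfl⟩ := Submodule.Quotient.mk_surjective _ d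
    obtain ⟨a, b, hl⟩ := (hL0mem x).mp hx
    refine ⟨(a, b), ?_⟩
    show (Submodule.Quotient.mk ⟨(a*2) • u + (b*2) • v, memL0 a b⟩ : latticeQuot L L0)
      = Submodule.Quotient.mk ⟨x, hx⟩
    rw [Submodule.Quotient.eq]
    have hmem : ((a*2) • u + (b*2) • v - x : V) ∈ L := by
      have hn := L.neg_mem hl
      convert hn using 1
      abel
    simpa using hmem
  set g : ℤ × ℤ →+ ZMod 2 × ZMod 2 :=
    (Int.castAddHom (ZMod 2)).prodMap (Int.castAddHom (ZMod 2)) with hgd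
  have hgsurj : Function.Surjective g := by
    rintro ⟨x, y⟩
    obtain ⟨a, rfl⟩ := ZMod.intCast_surjective x
    obtain ⟨b, rfl⟩ := ZMod.intCast_surjective y
    exact ⟨(a, b), rfl⟩
  have hkereq : Φ.ker = g.ker := by
    ext ⟨a, b⟩
    simp only [AddMonoidHom.mem_ker]
    have hgab : g (a, b) = ((a : ZMod 2), (b : ZMod 2)) := rfl
    constructor
    · intro h
      have hL : ((a*2) • u + (b*2) • v : V) ∈ L := by
        have h' := (Submodule.Quotient.mk_eq_zero (L.comap L0.subtype)).mp h
        simpa using h'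
      have hd : ((a*2) • u + (b*2) • v : V) ∈ Ld := c2 (memL0 a b)
      have e1 : (Submodule.Quotient.mk ⟨(a*2) • u + (b*2) • v, hd⟩ : latticeQuot L Ld)
          = (a*2 : ℤ) • ub + (b*2 : ℤ) • vb :=
        (hmk (a*2) (b*2) _ hd).mp (by
          rw [show ((a*2) • u + (b*2) • v) - ((a*2) • u + (b*2) • v) = (0:V) by abel]
          exact L.zero_mem)
      have e2 : (Submodule.Quotient.mk ⟨(a*2) • u + (b*2) • v, hd⟩ : latticeQuot L Ld) = 0 :=
        (Submodule.Quotient.mk_eq_zero _).mpr (by simpa using hL)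
      obtain ⟨d1, d2⟩ := hker _ _ (e1.symm.trans e2)
      have da : (2:ℤ) ∣ a := by omega
      have db : (2:ℤ) ∣ b := by omega
      have ea : (a : ZMod 2) = 0 := (ZMod.intCast_zmod_eq_zero_iff_dvd a 2).mpr (by exact_mod_cast da)
      have eb : (b : ZMod 2) = 0 := (ZMod.intCast_zmod_eq_zero_iff_dvd b 2).mpr (by exact_mod_cast db)
      rw [hgab, Prod.mk_eq_zero]
      exact ⟨ea, eb⟩
    · intro h
      rw [hgab, Prod.mk_eq_zero] at h
      obtain ⟨ea, eb⟩ := h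
      have da : (2:ℤ) ∣ a := by exact_mod_cast (ZMod.intCast_zmod_eq_zero_iff_dvd a 2).mp ea
      have db : (2:ℤ) ∣ b := by exact_mod_cast (ZMod.intCast_zmod_eq_zero_iff_dvd b 2).mp eb
      obtain ⟨a', rfl⟩ := da
      obtain ⟨b', rfl⟩ := db
      show (Submodule.Quotient.mk ⟨(2*a'*2) • u + (2*b'*2) • v, memL0 _ _⟩
        : latticeQuot L L0) = 0
      have hLmem : ((2*a'*2) • u + (2*b'*2) • v : V) ∈ L := by
        have h1 : ((2*a'*2) : ℤ) • u = a' • ((4:ℤ) • u) := by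
          rw [smul_smul]; congr 1; ring
        have h2 : ((2*b'*2) : ℤ) • v = b' • ((4:ℤ) • v) := by
          rw [smul_smul]; congr 1; ring
        rw [h1, h2]
        exact L.add_mem (L.smul_mem _ h4uL) (L.smul_mem _ h4vL)
      exact (Submodule.Quotient.mk_eq_zero _).mpr (by simpa using hLmem)
  have ε : latticeQuot L L0 ≃+ (ZMod 2 × ZMod 2) :=
    ((QuotientAddGroup.quotientKerEquivOfSurjective Φ hΦsurj).symm.trans
      (QuotientAddGroup.quotientAddEquivOfEq hkereq)).trans
      (QuotientAddGroup.quotientKerEquivOfSurjective g hgsurj)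
  have c3 : Nat.card (latticeQuot L L0) = 4 := by
    rw [Nat.card_congr ε.toEquiv, Nat.card_prod, Nat.card_zmod]
  have huniq : ∀ L' : Submodule ℤ V,
      (L ≤ L' ∧ L' ≤ dualLattice β L ∧
        Nat.card (latticeQuot L L') = 4 ∧
        (∀ x ∈ L', ∀ y ∈ L', ∃ n : ℤ, β x y = (n : ℚ)) ∧
        (∀ x ∈ L', ∃ n : ℤ, β x x = 2 * (n : ℚ))) → L' = L0 := by
    rintro L' ⟨h1, h2, h3, h4, h5⟩
    have hsub : L' ≤ L0 := by
      intro x hx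
      have hxd : x ∈ Ld := h2 hx
      obtain ⟨a, b, hab⟩ := hrep (Submodule.Quotient.mk ⟨x, hxd⟩)
      have hl : x - (a • u + b • v) ∈ L := (hmk a b x hxd).mpr hab
      have hx2 : x = a • u + b • v + (x - (a • u + b • v)) := by abel
      obtain ⟨n, hn⟩ := hself a b _ hl
      rw [← hx2] at hn
      obtain ⟨m, hm⟩ := h5 x hx
      rw [hm] at hn
      have hint4 : (4:ℤ) ∣ a*a + b*b + 3*(a*b) := by
        refine ⟨m - n, ?_⟩
        have hq : ((a*a + b*b + 3*(a*b) : ℤ) : ℚ) = ((4*(m - n) : ℤ) : ℚ) := by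
          push_cast at hn ⊢
          linarith
        exact_mod_cast hq
      obtain ⟨ha2, hb2⟩ := (quad_mod4 a b).mp hint4
      obtain ⟨a', rfl⟩ := ha2
      obtain ⟨b', rfl⟩ := hb2
      rw [hL0mem]
      refine ⟨a', b', ?_⟩
      have heq : x - (a'*2) • u - (b'*2) • v = x - ((2*a') • u + (2*b') • v) := by
        rw [mul_comm a' 2, mul_comm b' 2]; abel
      rw [heq]
      exact hl
    have hfin0 : Finite (latticeQuot L L0) :=
      Nat.finite_of_card_ne_zero (by rw [c3]; norm_num)
    have hle : L.comap L'.subtype ≤ (L.comap L0.subtype).comap (Submodule.inclusion hsub) := by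
      intro y hy
      simp only [Submodule.mem_comap] at hy ⊢
      simpa using hy
    set j := Submodule.mapQ (L.comap L'.subtype) (L.comap L0.subtype)
      (Submodule.inclusion hsub) hle with hjd
    have hjinj : Function.Injective j := by
      intro y z h
      obtain ⟨⟨y', hy'⟩, rfl⟩ := Submodule.Quotient.mk_surjective _ y
      obtain ⟨⟨z', hz'⟩, rfl⟩ := Submodule.Quotient.mk_surjective _ z
      rw [hjd, Submodule.mapQ_apply, Submodule.mapQ_apply, Submodule.Quotient.eq] at h
      rw [Submodule.Quotient.eq]
      simpa using h
    have hjbij : Function.Bijective j :=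
      (Nat.bijective_iff_injective_and_card j).mpr ⟨hjinj, by rw [h3, c3]⟩
    have hsub2 : L0 ≤ L' := by
      intro x hx
      obtain ⟨y, hy⟩ := hjbij.surjective (Submodule.Quotient.mk ⟨x, hx⟩)
      obtain ⟨⟨w, hw⟩, rfl⟩ := Submodule.Quotient.mk_surjective _ y
      rw [hjd, Submodule.mapQ_apply, Submodule.Quotient.eq] at hy
      have hwx : w - x ∈ L := by simpa using hy
      have hxw : x = w - (w - x) := by abel
      rw [hxw]
      exact L'.sub_mem hw (h1 hwx)
    exact le_antisymm hsub hsub2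
  refine ⟨⟨L0, ⟨c1, c2, c3, c4, c5⟩, fun L' h => huniq L' h⟩, ?_⟩
  intro L' h
  rw [huniq L' h]
  exact ⟨ε⟩
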